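/- Let p ≥ q ≥ 1, let n ≥ 1, and let B be a real p×q matrix with nonnegative entries such that every row of B and every column of B contains a positive entry. For any two positive divisors k and l of n, the (np+q)-square matrices L(F_k) ⊕ I_{(n − n/k)p + (1−k)q} and L(F_l) ⊕ I_{(n − n/l)p + (1−l)q} are cospectral, i.e., they have the same characteristic polynomial (after transporting along a bijection of their index types). -/

import Mathlib

set_option maxHeartbeats 1000000
set_option synthInstance.maxHeartbeats 400000


open Matrix Polynomial

/-- The matrix `F_k` of the generalization of Construction I: indexed by
`(Fin (n/k) × Fin p) ⊕ (Fin k × Fin q)`, with a copy of `B` between every `p`-block and every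
`q`-block, and zero blocks otherwise. -/
def matF (p q n k : ℕ) (B : Matrix (Fin p) (Fin q) ℝ) :
    Matrix ((Fin (n / k) × Fin p) ⊕ Fin k × Fin q) ((Fin (n / k) × Fin p) ⊕ Fin k × Fin q) ℝ :=
  Matrix.of fun a b =>
    match a, b with
    | Sum.inl (_, i), Sum.inr (_, j) => B i j
    | Sum.inr (_, j), Sum.inl (_, i) => B i j
    | _, _ => 0

/-- The normalized Laplacian `L(M) = I − Δ^{-1/2} M Δ^{-1/2}` of a matrix `M`, where
`Δ^{-1/2}` is the diagonal matrix of reciprocal square roots of the row sums of `M`. -/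
noncomputable def normLap {ι : Type} [Fintype ι] [DecidableEq ι] (M : Matrix ι ι ℝ) :
    Matrix ι ι ℝ :=
  1 - Matrix.diagonal (fun i => (Real.sqrt (∑ j, M i j))⁻¹) * M *
      Matrix.diagonal (fun i => (Real.sqrt (∑ j, M i j))⁻¹)

noncomputable abbrev phiR : Polynomial ℝ →+* RatFunc ℝ := algebraMap (Polynomial ℝ) (RatFunc ℝ)
noncomputable abbrev psiR : ℝ →+* RatFunc ℝ := phiR.comp Polynomial.C

lemma keyA {ι : Type} [Fintype ι] [DecidableEq ι] {m : Type} [Fintype m] [DecidableEq m]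
    (P : Matrix ι m ℝ) (S : Matrix m m ℝ) (h : Pᵀ * P = 1) :
    phiR ((1 - P * S * Pᵀ).charpoly) =
      (phiR X - 1) ^ (Fintype.card ι) *
        Matrix.det (1 + (phiR X - 1)⁻¹ • S.map psiR) := by
  set c : RatFunc ℝ := phiR X - 1 with hc
  have hinj : Function.Injective phiR := IsFractionRing.injective (Polynomial ℝ) (RatFunc ℝ)
  have hc0 : c ≠ 0 := by
    have : (X : Polynomial ℝ) - 1 ≠ 0 := by
      intro hh
      have := congrArg (fun f => Polynomial.coeff f 1) hh
      simp [Polynomial.coeff_one] at this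
    intro hh
    apply this
    apply hinj
    rw [map_sub, _root_.map_one, map_zero]
    exact hh
  have hmap : (charmatrix (1 - P * S * Pᵀ)).map phiR =
      c • (1 : Matrix ι ι (RatFunc ℝ)) + (P.map psiR) * (S.map psiR) * (P.map psiR)ᵀ := by
    ext i j
    by_cases hij : i = j
    · subst hij
      simp [charmatrix_apply_eq, Matrix.map_apply, Matrix.add_apply, Matrix.smul_apply,
        Matrix.one_apply_eq, ← Matrix.map_mul, ← Matrix.transpose_map, Matrix.sub_apply,
        Matrix.one_apply_eq, map_sub, hc, smul_eq_mul]
      ring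
    · simp [charmatrix_apply_ne _ _ _ hij, Matrix.map_apply, Matrix.add_apply, Matrix.smul_apply,
        Matrix.one_apply_ne hij, ← Matrix.map_mul, ← Matrix.transpose_map, Matrix.sub_apply,
        Matrix.one_apply_ne hij, hc]
  have hPP : (P.map psiR)ᵀ * (P.map psiR) = 1 := by
    rw [← Matrix.transpose_map, ← Matrix.map_mul, h, Matrix.map_one _ (map_zero _) (_root_.map_one _)]
  rw [Matrix.charpoly, RingHom.map_det, RingHom.mapMatrix_apply, hmap]
  have hrw : c • (1 : Matrix ι ι (RatFunc ℝ)) + (P.map psiR) * (S.map psiR) * (P.map psiR)ᵀ =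
      c • (1 + (c⁻¹ • ((P.map psiR) * (S.map psiR))) * (P.map psiR)ᵀ) := by
    rw [smul_add, Matrix.smul_mul, smul_smul, mul_inv_cancel₀ hc0, one_smul]
  rw [hrw, Matrix.det_smul, Matrix.det_one_add_mul_comm]
  congr 1
  rw [Matrix.mul_smul, ← Matrix.mul_assoc, hPP, Matrix.one_mul]

/-- The common small matrix. -/
noncomputable def matS (p q : ℕ) (B : Matrix (Fin p) (Fin q) ℝ) :
    Matrix (Fin p ⊕ Fin q) (Fin p ⊕ Fin q) ℝ :=
  Matrix.of fun u v =>
    match u, v with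
    | Sum.inl a, Sum.inr b =>
        B a b / (Real.sqrt (∑ b', B a b') * Real.sqrt (∑ a', B a' b))
    | Sum.inr b, Sum.inl a =>
        B a b / (Real.sqrt (∑ b', B a b') * Real.sqrt (∑ a', B a' b))
    | _, _ => 0

/-- The partial isometry. -/
noncomputable def matP (p q n k : ℕ) :
    Matrix (((Fin (n / k) × Fin p) ⊕ Fin k × Fin q) ⊕ Fin (n * p + q - (k * q + n / k * p)))
      (Fin p ⊕ Fin q) ℝ :=
  Matrix.of fun x u =>
    match x, u with
    | Sum.inl (Sum.inl (_, a)), Sum.inl a' => if a' = a then Real.sqrt ((k : ℝ) / n) else 0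
    | Sum.inl (Sum.inr (_, b)), Sum.inr b' => if b' = b then Real.sqrt (1 / (k : ℝ)) else 0
    | _, _ => 0

lemma matP_isometry (p q n k : ℕ) (hn : 1 ≤ n) (hk : k ∣ n) (hk1 : 1 ≤ k) :
    (matP p q n k)ᵀ * matP p q n k = 1 := by
  have hk0 : (k : ℝ) ≠ 0 := Nat.cast_ne_zero.mpr (by omega)
  have hn0 : (n : ℝ) ≠ 0 := Nat.cast_ne_zero.mpr (by omega)
  have hnk : ((n / k : ℕ) : ℝ) = (n : ℝ) / k := Nat.cast_div hk hk0
  have hnk1 : 1 ≤ n / k := Nat.one_le_div_iff (by omega) |>.mpr (Nat.le_of_dvd (by omega) hk)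
  ext u v
  rcases u with a | b <;> rcases v with a' | b' <;>
    simp [Matrix.mul_apply, matP, Fintype.sum_sum_type, Fintype.sum_prod_type,
      Matrix.one_apply, mul_ite, ite_mul, Finset.sum_ite_eq, Finset.sum_const,
      Sum.inl.injEq, Sum.inr.injEq]
  · rcases eq_or_ne a a' with h | h
    · simp only [if_pos h, Finset.sum_const, Finset.card_univ, Fintype.card_fin, nsmul_eq_mul, hnk]
      rw [div_mul_div_comm, Real.mul_self_sqrt (by positivity), Real.mul_self_sqrt (by positivity)]
      field_simp
    · simp [h]
  · rcases eq_or_ne b b' with h | h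
    · simp only [if_pos h, Finset.sum_const, Finset.card_univ, Fintype.card_fin, nsmul_eq_mul]
      rw [← mul_inv, Real.mul_self_sqrt (by positivity)]
      field_simp
    · simp [h]

lemma block_eq (p q n k : ℕ) (hn : 1 ≤ n) (hk : k ∣ n) (hk1 : 1 ≤ k)
    (B : Matrix (Fin p) (Fin q) ℝ) (hB : ∀ i j, 0 ≤ B i j)
    (hrow : ∀ i, ∃ j, 0 < B i j) (hcol : ∀ j, ∃ i, 0 < B i j) :
    Matrix.fromBlocks (normLap (matF p q n k B)) 0 0
        (1 : Matrix (Fin (n * p + q - (k * q + n / k * p)))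
          (Fin (n * p + q - (k * q + n / k * p))) ℝ) =
      1 - matP p q n k * matS p q B * (matP p q n k)ᵀ := by
  have hk0 : (k : ℝ) ≠ 0 := Nat.cast_ne_zero.mpr (by omega)
  have hn0 : (n : ℝ) ≠ 0 := Nat.cast_ne_zero.mpr (by omega)
  have hnk : ((n / k : ℕ) : ℝ) = (n : ℝ) / k := Nat.cast_div hk hk0
  have hra : ∀ a, 0 < ∑ b', B a b' := fun a =>
    Finset.sum_pos' (fun _ _ => hB _ _) (by obtain ⟨j, hj⟩ := hrow a; exact ⟨j, Finset.mem_univ _, hj⟩)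
  have hcb : ∀ b, 0 < ∑ a', B a' b := fun b =>
    Finset.sum_pos' (fun _ _ => hB _ _) (by obtain ⟨i, hi⟩ := hcol b; exact ⟨i, Finset.mem_univ _, hi⟩)
  have hs1 : ∀ (i : Fin (n / k)) (a : Fin p),
      ∑ y, matF p q n k B (Sum.inl (i, a)) y = (k : ℝ) * ∑ b, B a b := by
    intro i a
    rw [Fintype.sum_sum_type]
    simp [matF, Fintype.sum_prod_type, Finset.sum_const]
  have hs2 : ∀ (j : Fin k) (b : Fin q),
      ∑ y, matF p q n k B (Sum.inr (j, b)) y = ((n / k : ℕ) : ℝ) * ∑ a, B a b := by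
    intro j b
    rw [Fintype.sum_sum_type]
    simp [matF, Fintype.sum_prod_type, Finset.sum_const]
  have h3 : ∀ (f : ((Fin (n / k) × Fin p) ⊕ Fin k × Fin q) → ℝ)
      (M : Matrix ((Fin (n / k) × Fin p) ⊕ Fin k × Fin q) ((Fin (n / k) × Fin p) ⊕ Fin k × Fin q) ℝ)
      (x y : (Fin (n / k) × Fin p) ⊕ Fin k × Fin q),
      (Matrix.diagonal f * M * Matrix.diagonal f) x y = f x * M x y * f y := by
    intro f M x y
    rw [Matrix.mul_diagonal, Matrix.diagonal_mul]
  have hkp : (0:ℝ) < k := by positivity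
  have hnp : (0:ℝ) < n := by positivity
  have hcalc1 : ∀ ra cb Bv : ℝ, 0 < ra → 0 < cb →
      (Real.sqrt ((k:ℝ) * ra))⁻¹ * Bv * (Real.sqrt (((n:ℝ)/k) * cb))⁻¹ =
        Real.sqrt ((k:ℝ)/n) * (Bv / (Real.sqrt ra * Real.sqrt cb)) * Real.sqrt (1/(k:ℝ)) := by
    intro ra cb Bv h1 h2
    rw [Real.sqrt_mul hkp.le, Real.sqrt_mul (by positivity), Real.sqrt_div hkp.le,
      Real.sqrt_div hnp.le, one_div, Real.sqrt_inv]
    have s1 : (0:ℝ) < Real.sqrt k := Real.sqrt_pos.mpr hkp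
    have s2 : (0:ℝ) < Real.sqrt n := Real.sqrt_pos.mpr hnp
    have s3 : (0:ℝ) < Real.sqrt ra := Real.sqrt_pos.mpr h1
    have s4 : (0:ℝ) < Real.sqrt cb := Real.sqrt_pos.mpr h2
    field_simp
  have hcalc2 : ∀ ra cb Bv : ℝ, 0 < ra → 0 < cb →
      (Real.sqrt (((n:ℝ)/k) * cb))⁻¹ * Bv * (Real.sqrt ((k:ℝ) * ra))⁻¹ =
        Real.sqrt (1/(k:ℝ)) * (Bv / (Real.sqrt ra * Real.sqrt cb)) * Real.sqrt ((k:ℝ)/n) := by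
    intro ra cb Bv h1 h2
    rw [Real.sqrt_mul hkp.le, Real.sqrt_mul (by positivity), Real.sqrt_div hkp.le,
      Real.sqrt_div hnp.le, one_div, Real.sqrt_inv]
    have s1 : (0:ℝ) < Real.sqrt k := Real.sqrt_pos.mpr hkp
    have s2 : (0:ℝ) < Real.sqrt n := Real.sqrt_pos.mpr hnp
    have s3 : (0:ℝ) < Real.sqrt ra := Real.sqrt_pos.mpr h1
    have s4 : (0:ℝ) < Real.sqrt cb := Real.sqrt_pos.mpr h2
    field_simp
  ext x y
  rcases x with (⟨i, a⟩ | ⟨j, b⟩) | z <;> rcases y with (⟨i', a'⟩ | ⟨j', b'⟩) | z' <;>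
    simp only [normLap, Matrix.fromBlocks_apply₁₁, Matrix.fromBlocks_apply₁₂,
      Matrix.fromBlocks_apply₂₁, Matrix.fromBlocks_apply₂₂, Matrix.sub_apply, h3,
      Matrix.zero_apply, Matrix.one_apply, hs1, hs2] <;>
    (try simp only [matF, Matrix.of_apply]) <;>
    (try simp only [Matrix.mul_apply, Matrix.transpose_apply, matP, matS, Matrix.of_apply,
      Fintype.sum_sum_type, Fintype.sum_prod_type, mul_ite, ite_mul, mul_zero, zero_mul,
      Finset.sum_const_zero, Finset.sum_ite_eq, Finset.mem_univ, if_true, mul_one, one_mul,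
      add_zero, zero_add, Finset.sum_const, Finset.card_univ, Fintype.card_fin,
      smul_eq_mul, nsmul_eq_mul, zero_sub, sub_zero]) <;>
    (try simp only [Finset.sum_ite_eq', Finset.mem_univ, if_true, Finset.sum_const_zero, zero_mul,
      mul_zero, sub_zero]) <;>
    try (simp [Sum.inl.injEq, Sum.inr.injEq, Prod.mk.injEq]; done)
  all_goals rw [if_neg (by simp), if_neg (by simp), zero_sub, zero_sub, neg_inj, hnk]
  · exact hcalc1 _ _ _ (hra a) (hcb b')
  · exact hcalc2 _ _ _ (hra a') (hcb b)

lemma le_aux (p q n k : ℕ) (hq : 1 ≤ q) (hpq : q ≤ p) (hn : 1 ≤ n) (hk : k ∣ n) (hk1 : 1 ≤ k) :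
    k * q + n / k * p ≤ n * p + q := by
  obtain ⟨d, rfl⟩ := hk
  have hd1 : 1 ≤ d := by
    rcases Nat.eq_zero_or_pos d with h | h
    · subst h; simp at hn
    · exact h
  rw [Nat.mul_div_cancel_left d (by omega)]
  obtain ⟨k', rfl⟩ : ∃ k', k = k' + 1 := ⟨k - 1, by omega⟩
  have h1 : q ≤ d * p := le_trans hpq (Nat.le_mul_of_pos_left p hd1)
  have h3 : k' * q ≤ k' * (d * p) := Nat.mul_le_mul_left _ h1
  have h4 : (k' + 1) * q = k' * q + q := by ring
  have h5 : (k' + 1) * d * p = k' * (d * p) + d * p := by ring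
  omega

/-- For any two positive divisors `k` and `l` of `n`, the `(np+q)`-square matrices
`L(F_k) ⊕ I_{(n − n/k)p + (1−k)q}` and `L(F_l) ⊕ I_{(n − n/l)p + (1−l)q}` are cospectral.
(The number of padding ones `(n − n/k)p + (1−k)q = np + q − (kq + (n/k)p)`.) -/
theorem matF_normLap_cospectral (p q n k l : ℕ) (hq : 1 ≤ q) (hpq : q ≤ p) (hn : 1 ≤ n)
    (hk : k ∣ n) (hk1 : 1 ≤ k) (hl : l ∣ n) (hl1 : 1 ≤ l)
    (B : Matrix (Fin p) (Fin q) ℝ) (hB : ∀ i j, 0 ≤ B i j)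
    (hrow : ∀ i, ∃ j, 0 < B i j) (hcol : ∀ j, ∃ i, 0 < B i j) :
    ∃ e : (((Fin (n / k) × Fin p) ⊕ Fin k × Fin q) ⊕ Fin (n * p + q - (k * q + n / k * p))) ≃
        (((Fin (n / l) × Fin p) ⊕ Fin l × Fin q) ⊕ Fin (n * p + q - (l * q + n / l * p))),
      (Matrix.fromBlocks (normLap (matF p q n k B)) 0 0
          (1 : Matrix (Fin (n * p + q - (k * q + n / k * p)))
            (Fin (n * p + q - (k * q + n / k * p))) ℝ)).charpoly =
        ((Matrix.fromBlocks (normLap (matF p q n l B)) 0 0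
            (1 : Matrix (Fin (n * p + q - (l * q + n / l * p)))
              (Fin (n * p + q - (l * q + n / l * p))) ℝ)).submatrix e e).charpoly := by
  have hcard : ∀ (m : ℕ), m ∣ n → 1 ≤ m →
      Fintype.card (((Fin (n / m) × Fin p) ⊕ Fin m × Fin q) ⊕
        Fin (n * p + q - (m * q + n / m * p))) = n * p + q := by
    intro m hm hm1
    have hle := le_aux p q n m hq hpq hn hm hm1
    simp only [Fintype.card_sum, Fintype.card_prod, Fintype.card_fin]
    omega
  have h1 := block_eq p q n k hn hk hk1 B hB hrow hcol
  have h2 := block_eq p q n l hn hl hl1 B hB hrow hcol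
  have e1 := keyA (matP p q n k) (matS p q B) (matP_isometry p q n k hn hk hk1)
  have e2 := keyA (matP p q n l) (matS p q B) (matP_isometry p q n l hn hl hl1)
  have hinj : Function.Injective phiR := IsFractionRing.injective (Polynomial ℝ) (RatFunc ℝ)
  have hchar : (Matrix.fromBlocks (normLap (matF p q n k B)) 0 0
        (1 : Matrix (Fin (n * p + q - (k * q + n / k * p)))
          (Fin (n * p + q - (k * q + n / k * p))) ℝ)).charpoly =
      (Matrix.fromBlocks (normLap (matF p q n l B)) 0 0
        (1 : Matrix (Fin (n * p + q - (l * q + n / l * p)))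
          (Fin (n * p + q - (l * q + n / l * p))) ℝ)).charpoly := by
    apply hinj
    rw [h1, h2, e1, e2, hcard k hk hk1, hcard l hl hl1]
  have hce : Fintype.card (((Fin (n / k) × Fin p) ⊕ Fin k × Fin q) ⊕
      Fin (n * p + q - (k * q + n / k * p))) =
      Fintype.card (((Fin (n / l) × Fin p) ⊕ Fin l × Fin q) ⊕
        Fin (n * p + q - (l * q + n / l * p))) := by
    rw [hcard k hk hk1, hcard l hl hl1]
  refine ⟨Fintype.equivOfCardEq hce, ?_⟩
  rw [hchar]
  rw [show (Matrix.fromBlocks (normLap (matF p q n l B)) 0 0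
        (1 : Matrix (Fin (n * p + q - (l * q + n / l * p)))
          (Fin (n * p + q - (l * q + n / l * p))) ℝ)).submatrix (Fintype.equivOfCardEq hce)
        (Fintype.equivOfCardEq hce) =
      Matrix.reindex (Fintype.equivOfCardEq hce).symm (Fintype.equivOfCardEq hce).symm
        (Matrix.fromBlocks (normLap (matF p q n l B)) 0 0
          (1 : Matrix (Fin (n * p + q - (l * q + n / l * p)))
            (Fin (n * p + q - (l * q + n / l * p))) ℝ)) from by
    rw [Matrix.reindex_apply]; simp]
  rw [Matrix.charpoly_reindex]
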